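/- If O, A, B, C ∈ ℤ³ are vertices of a regular tetrahedron, then each coordinate of (A−O)+(B−O)+(C−O) is an even integer. -/
import Mathlib

set_option maxHeartbeats 1000000


/-- Casting a vector of integers to a point of `ℝ³` (with the Euclidean structure). -/
noncomputable def intVec (v : Fin 3 → ℤ) : EuclideanSpace ℝ (Fin 3) :=
  (WithLp.equiv 2 (Fin 3 → ℝ)).symm fun i => (v i : ℝ)

lemma intVec_dist_sq (v w : Fin 3 → ℤ) :
    dist (intVec v) (intVec w) ^ 2 = ((∑ i, (v i - w i)^2 : ℤ) : ℝ) := by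
  rw [EuclideanSpace.dist_eq, Real.sq_sqrt (by positivity)]
  push_cast
  simp [intVec, Real.dist_eq, sq_abs]

lemma dist_eq_sum_sq_eq {v w v' w' : Fin 3 → ℤ}
    (h : dist (intVec v) (intVec w) = dist (intVec v') (intVec w')) :
    (∑ i, (v i - w i)^2 : ℤ) = ∑ i, (v' i - w' i)^2 := by
  have := congrArg (fun x : ℝ => x ^ 2) h
  simp only [intVec_dist_sq] at this
  exact_mod_cast this

lemma even_of_sq (x : ℤ) : Even (x^2 - x) := by
  have h : Even ((x - 1) * ((x - 1) + 1)) := Int.even_mul_succ_self (x - 1)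
  have hx : (x - 1) * ((x - 1) + 1) = x^2 - x := by ring
  rwa [hx] at h

/-- If `O, A, B, C ∈ ℤ³` are the vertices of a regular tetrahedron, then every coordinate
of `(A−O)+(B−O)+(C−O)` is even. -/
theorem tetrahedron_sum_coords_even (O A B C : Fin 3 → ℤ)
    (hOA : O ≠ A) (hOB : O ≠ B) (hOC : O ≠ C) (hAB : A ≠ B) (hAC : A ≠ C) (hBC : B ≠ C)
    (h1 : dist (intVec O) (intVec A) = dist (intVec O) (intVec B))
    (h2 : dist (intVec O) (intVec B) = dist (intVec O) (intVec C))
    (h3 : dist (intVec O) (intVec C) = dist (intVec A) (intVec B))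
    (h4 : dist (intVec A) (intVec B) = dist (intVec A) (intVec C))
    (h5 : dist (intVec A) (intVec C) = dist (intVec B) (intVec C)) :
    ∀ i, Even ((A - O) i + (B - O) i + (C - O) i) := by
  have e1 := dist_eq_sum_sq_eq h1
  have e2 := dist_eq_sum_sq_eq h2
  have e3 := dist_eq_sum_sq_eq h3
  have e4 := dist_eq_sum_sq_eq h4
  have e5 := dist_eq_sum_sq_eq h5
  simp only [Fin.sum_univ_three] at e1 e2 e3 e4 e5
  set u0 : Fin 3 → ℤ := fun j => A j + B j - C j - O j with hu0
  set u1 : Fin 3 → ℤ := fun j => A j - B j + C j - O j with hu1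
  set u2 : Fin 3 → ℤ := fun j => - A j + B j + C j - O j with hu2
  set d : ℤ := ∑ j, (A j - O j)^2 with hd
  have hdval : d = (A 0 - O 0)^2 + (A 1 - O 1)^2 + (A 2 - O 2)^2 := by
    rw [hd, Fin.sum_univ_three]
  -- the six orthogonality/norm relations (expanded)
  have n00 : u0 0 * u0 0 + u0 1 * u0 1 + u0 2 * u0 2 = 2 * d := by
    simp only [hu0, hdval]; linear_combination - e1 - e3 - 2*e4 - e5
  have n11 : u1 0 * u1 0 + u1 1 * u1 1 + u1 2 * u1 2 = 2 * d := by
    simp only [hu1, hdval]; linear_combination - e1 - 2*e2 - e3 - e5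
  have n22 : u2 0 * u2 0 + u2 1 * u2 1 + u2 2 * u2 2 = 2 * d := by
    simp only [hu2, hdval]; linear_combination - 3*e1 - 2*e2 - e3 + e5
  have n01 : u0 0 * u1 0 + u0 1 * u1 1 + u0 2 * u1 2 = 0 := by
    simp only [hu0, hu1]; linear_combination e1 + e2 + e3 + e4 + e5
  have n02 : u0 0 * u2 0 + u0 1 * u2 1 + u0 2 * u2 2 = 0 := by
    simp only [hu0, hu2]; linear_combination e2 + e3 + e4
  have n12 : u1 0 * u2 0 + u1 1 * u2 1 + u1 2 * u2 2 = 0 := by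
    simp only [hu1, hu2]; linear_combination e3
  -- cast those relations to ℚ
  have q00 : (u0 0 : ℚ) * u0 0 + u0 1 * u0 1 + u0 2 * u0 2 = 2 * (d : ℚ) := by exact_mod_cast n00
  have q11 : (u1 0 : ℚ) * u1 0 + u1 1 * u1 1 + u1 2 * u1 2 = 2 * (d : ℚ) := by exact_mod_cast n11
  have q22 : (u2 0 : ℚ) * u2 0 + u2 1 * u2 1 + u2 2 * u2 2 = 2 * (d : ℚ) := by exact_mod_cast n22
  have q01 : (u0 0 : ℚ) * u1 0 + u0 1 * u1 1 + u0 2 * u1 2 = 0 := by exact_mod_cast n01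
  have q02 : (u0 0 : ℚ) * u2 0 + u0 1 * u2 1 + u0 2 * u2 2 = 0 := by exact_mod_cast n02
  have q12 : (u1 0 : ℚ) * u2 0 + u1 1 * u2 1 + u1 2 * u2 2 = 0 := by exact_mod_cast n12
  -- d > 0
  have hdpos : 0 < d := by
    obtain ⟨j, hj⟩ := Function.ne_iff.mp hOA
    have hne : A j - O j ≠ 0 := sub_ne_zero.mpr (Ne.symm hj)
    have h1' : (1 : ℤ) ≤ (A j - O j)^2 := by
      have habs : (1 : ℤ) ≤ |A j - O j| := Int.one_le_abs hne
      calc (1 : ℤ) ≤ |A j - O j| := habs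
        _ ≤ |A j - O j| * |A j - O j| := le_mul_of_one_le_left (abs_nonneg _) habs
        _ = (A j - O j)^2 := by rw [abs_mul_abs_self, sq]
    have h2' : (A j - O j)^2 ≤ d := by
      rw [hd]
      exact Finset.single_le_sum (f := fun k => (A k - O k)^2)
        (fun k _ => sq_nonneg _) (Finset.mem_univ j)
    linarith
  -- matrix argument over ℚ
  set w : Fin 3 → Fin 3 → ℤ := ![u0, u1, u2] with hw
  set M : Matrix (Fin 3) (Fin 3) ℚ := Matrix.of fun k i => ((w k i : ℚ)) with hM
  set c : ℚ := 2 * (d : ℚ) with hc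
  have hcne : c ≠ 0 := by
    rw [hc]
    have : (0 : ℚ) < (d : ℚ) := by exact_mod_cast hdpos
    positivity
  have hMMT : M * M.transpose = c • 1 := by
    ext k l
    fin_cases k <;> fin_cases l <;>
      simp only [hM, hw, Matrix.mul_apply, Matrix.transpose_apply, Fin.sum_univ_three,
        Matrix.smul_apply, Matrix.one_apply, Matrix.of_apply, Matrix.cons_val_zero,
        Matrix.cons_val_one, Matrix.head_cons, Matrix.cons_val_two, Matrix.tail_cons,
        Fin.mk_zero, Fin.mk_one, smul_eq_mul] <;>
      norm_num [hc, Fin.ext_iff] <;>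
      first
      | linear_combination q00
      | linear_combination q11
      | linear_combination q22
      | linear_combination q01
      | linear_combination q02
      | linear_combination q12
  have h1m : M * (c⁻¹ • M.transpose) = 1 := by
    rw [Matrix.mul_smul, hMMT, smul_smul, inv_mul_cancel₀ hcne, one_smul]
  have h2m : (c⁻¹ • M.transpose) * M = 1 := mul_eq_one_comm.mp h1m
  have hMTM : M.transpose * M = c • 1 := by
    have h := congrArg (fun X => c • X) h2m
    simpa [Matrix.smul_mul, smul_smul, mul_inv_cancel₀ hcne] using h
  intro i
  have hdiag := congrArg (fun X : Matrix (Fin 3) (Fin 3) ℚ => X i i) hMTM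
  simp only [Matrix.mul_apply, Matrix.transpose_apply, Fin.sum_univ_three, Matrix.smul_apply,
    Matrix.one_apply_eq, smul_eq_mul, mul_one, hM, hw, Matrix.of_apply, hc,
    Matrix.cons_val_zero, Matrix.cons_val_one, Matrix.head_cons, Matrix.cons_val_two,
    Matrix.tail_cons] at hdiag
  have hdiagZ : u0 i * u0 i + u1 i * u1 i + u2 i * u2 i = 2 * d := by
    exact_mod_cast hdiag
  have heven : Even (u0 i ^ 2 + u1 i ^ 2 + u2 i ^ 2) := ⟨d, by linear_combination hdiagZ⟩
  have hfinal : Even (u0 i + u1 i + u2 i) := by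
    have h0 := even_of_sq (u0 i)
    have h1' := even_of_sq (u1 i)
    have h2' := even_of_sq (u2 i)
    have hrw : u0 i + u1 i + u2 i =
        (u0 i ^ 2 + u1 i ^ 2 + u2 i ^ 2) - (u0 i ^ 2 - u0 i) - (u1 i ^ 2 - u1 i)
          - (u2 i ^ 2 - u2 i) := by ring
    rw [hrw]
    exact ((heven.sub h0).sub h1').sub h2'
  have hgoal : (A - O) i + (B - O) i + (C - O) i = u0 i + u1 i + u2 i := by
    simp only [Pi.sub_apply, hu0, hu1, hu2]; ring
  rw [hgoal]
  exact hfinal
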